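/- (Lemma 4.3, second estimate.) Assume in addition that there is w : [0,T] → V with v(t) = j(w(t)) for all t ∈ [0,T]. Then for all t ∈ (0,T) and all s ∈ (−T,T) with t+s ∈ (0,T): ‖v(t+s) − v(t)‖²_H ≤ √|s| · ‖w(t+s) − w(t)‖_V · (∫_I ‖g(τ)‖²_{V'} dτ)^{1/2}, where I is the interval with endpoints t and t+s. -/

import Mathlib

open MeasureTheory Set Filter Topology
open scoped ENNReal NNReal

noncomputable section

/-- Lemma 4.3, second estimate. -/
theorem nikolskii_estimate_gelfand_triple_squared
    -- the Gelfand triple `(V, H, V')`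
    {V H : Type*} [NormedAddCommGroup V] [InnerProductSpace ℝ V]
    [NormedAddCommGroup H] [InnerProductSpace ℝ H]
    (j : V →L[ℝ] H) (hjinj : Function.Injective j) (hjdense : DenseRange j)
    (T : ℝ) (hT : 0 < T)
    (v : ℝ → H) (g : ℝ → StrongDual ℝ V)
    -- `g ∈ L²((0,T), V')`
    (hg : MemLp g 2 ((volume : Measure ℝ).restrict (Ioo 0 T)))
    -- `v ∈ H¹((0,T),V')` with weak time derivative `g`:
    (hweak : ∀ (φ : V) (t₁ t₂ : ℝ), 0 ≤ t₁ → t₁ ≤ t₂ → t₂ ≤ T →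
      (inner ℝ (v t₂ - v t₁) (j φ) : ℝ) = ∫ τ in Ioo t₁ t₂, g τ φ)
    -- `v` takes values in (the image of) `V`:
    (w : ℝ → V) (hv : ∀ t ∈ Icc (0:ℝ) T, v t = j (w t)) :
    ∀ t ∈ Ioo (0:ℝ) T, ∀ s : ℝ, -T < s → s < T → t + s ∈ Ioo (0:ℝ) T →
      ‖v (t + s) - v t‖^2 ≤
        Real.sqrt |s| * ‖w (t + s) - w t‖ * (∫ τ in uIoc t (t + s), ‖g τ‖^2) ^ ((1:ℝ)/2) := by
  have key : ∀ a b : ℝ, 0 ≤ a → a ≤ b → b ≤ T →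
      ‖v b - v a‖^2 ≤
        Real.sqrt (b - a) * ‖w b - w a‖ * (∫ τ in Ioc a b, ‖g τ‖^2) ^ ((1:ℝ)/2) := by
    intro a b h0a hab hbT
    set φ := w b - w a with hφ
    have hsub : Ioo a b ⊆ Ioo 0 T := fun x hx =>
      ⟨lt_of_le_of_lt h0a hx.1, lt_of_lt_of_le hx.2 hbT⟩
    have hmem : MemLp g 2 ((volume : Measure ℝ).restrict (Ioo a b)) :=
      hg.mono_measure (Measure.restrict_mono hsub le_rfl)
    haveI : IsFiniteMeasure ((volume : Measure ℝ).restrict (Ioo a b)) := by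
      constructor
      rw [Measure.restrict_apply_univ, Real.volume_Ioo]
      exact ENNReal.ofReal_lt_top
    have hint : Integrable g ((volume : Measure ℝ).restrict (Ioo a b)) :=
      hmem.integrable (by norm_num)
    have hEq : ‖v b - v a‖^2 = ∫ τ in Ioo a b, g τ φ := by
      rw [← hweak φ a b h0a hab hbT]
      have hvb : v b - v a = j φ := by
        rw [hv b ⟨le_trans h0a hab, hbT⟩, hv a ⟨h0a, le_trans hab hbT⟩, hφ, map_sub]
      rw [hvb, real_inner_self_eq_norm_sq]
    have h1 : (∫ τ in Ioo a b, g τ φ) ≤ ∫ τ in Ioo a b, ‖g τ‖ * ‖φ‖ := by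
      refine integral_mono (hint.apply_continuousLinearMap φ) (hint.norm.mul_const _) ?_
      intro τ
      have h := (g τ).le_opNorm φ
      rw [Real.norm_eq_abs] at h
      exact le_trans (le_abs_self _) h
    have h2 : (∫ τ in Ioo a b, ‖g τ‖ * ‖φ‖) = (∫ τ in Ioo a b, ‖g τ‖) * ‖φ‖ :=
      integral_mul_const _ _
    have hconj : Real.HolderConjugate 2 2 := Real.HolderConjugate.two_two
    have h3 : (∫ τ in Ioo a b, (fun _ : ℝ => (1:ℝ)) τ * ‖g τ‖) ≤
        (∫ τ in Ioo a b, (1:ℝ) ^ (2:ℝ)) ^ ((1:ℝ)/2) *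
          (∫ τ in Ioo a b, ‖g τ‖ ^ (2:ℝ)) ^ ((1:ℝ)/2) := by
      refine integral_mul_le_Lp_mul_Lq_of_nonneg hconj ?_ ?_ ?_ ?_
      · exact Eventually.of_forall fun _ => zero_le_one
      · exact Eventually.of_forall fun _ => norm_nonneg _
      · simpa using (memLp_const (1:ℝ) (μ := (volume : Measure ℝ).restrict (Ioo a b)) (p := 2))
      · simpa using hmem.norm
    have hone : (∫ τ in Ioo a b, (1:ℝ) ^ (2:ℝ)) = b - a := by
      simp [Measure.restrict_apply_univ, Real.volume_Ioo, ENNReal.toReal_ofReal (sub_nonneg.2 hab), hab]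
    have hsq : (∫ τ in Ioo a b, ‖g τ‖ ^ (2:ℝ)) = ∫ τ in Ioo a b, ‖g τ‖ ^ 2 := by
      refine integral_congr_ae (Eventually.of_forall fun τ => ?_)
      show ‖g τ‖ ^ (2:ℝ) = ‖g τ‖ ^ (2:ℕ)
      rw [show (2:ℝ) = ((2:ℕ):ℝ) by norm_num, Real.rpow_natCast]
    have h3' : (∫ τ in Ioo a b, ‖g τ‖) ≤
        Real.sqrt (b - a) * (∫ τ in Ioo a b, ‖g τ‖ ^ 2) ^ ((1:ℝ)/2) := by
      have := h3
      simp only [one_mul] at this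
      rw [hone, hsq, ← Real.sqrt_eq_rpow] at this
      exact this
    have hIoc : (∫ τ in Ioc a b, ‖g τ‖^2) = ∫ τ in Ioo a b, ‖g τ‖^2 :=
      integral_Ioc_eq_integral_Ioo
    rw [hEq, hIoc]
    calc (∫ τ in Ioo a b, g τ φ) ≤ (∫ τ in Ioo a b, ‖g τ‖) * ‖φ‖ := h2 ▸ h1
      _ ≤ (Real.sqrt (b - a) * (∫ τ in Ioo a b, ‖g τ‖ ^ 2) ^ ((1:ℝ)/2)) * ‖φ‖ := by
          apply mul_le_mul_of_nonneg_right h3' (norm_nonneg _)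
      _ = Real.sqrt (b - a) * ‖φ‖ * (∫ τ in Ioo a b, ‖g τ‖ ^ 2) ^ ((1:ℝ)/2) := by ring
  intro t ht s hs1 hs2 hts
  rcases le_or_gt 0 s with hs | hs
  · have := key t (t + s) ht.1.le (by linarith) hts.2.le
    rw [uIoc_of_le (by linarith : t ≤ t + s), abs_of_nonneg hs]
    simpa using this
  · have := key (t + s) t hts.1.le (by linarith) ht.2.le
    rw [uIoc_of_ge (by linarith : t + s ≤ t), abs_of_neg hs]
    rw [norm_sub_rev (v (t+s)), norm_sub_rev (w (t+s))]
    have h' : t - (t + s) = -s := by ring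
    rw [h'] at this
    exact this
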